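/- Write Ξ(l,m) = p(l,m)·P + q(l,m)·Q + r(l,m)·R + s(l,m)·S (this expansion is unique since {P, Q, R, S} is a basis of M₂(ℝ) when ad − bc ≠ 0). Then: (a) for l ≥ 1 and m ≥ 2, q(l,m) = Σ_{γ=1}^{min(l, m−1)} C(l−1, γ−1) · C(m−1, γ) · a^{l−γ} · b^γ · c^γ · d^{m−(γ+1)}; (b) for l ≥ 1 and m ≥ 1, r(l,m) = Σ_{γ=1}^{min(l,m)} C(l−1, γ−1) · C(m−1, γ−1) · a^{l−γ} · b^γ · c^{γ−1} · d^{m−γ}; (c) for l ≥ 1 and m ≥ 1, s(l,m) = Σ_{γ=1}^{min(l,m)} C(l−1, γ−1) · C(m−1, γ−1) · a^{l−γ} · b^{γ−1} · c^γ · d^{m−γ}. Here C denotes the binomial coefficient. -/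

import Mathlib

open scoped BigOperators

/-- The matrix `P = [[a, b], [0, 0]]`. -/
noncomputable def Pmat (a b : ℝ) : Matrix (Fin 2) (Fin 2) ℝ := !![a, b; 0, 0]
/-- The matrix `Q = [[0, 0], [c, d]]`. -/
noncomputable def Qmat (c d : ℝ) : Matrix (Fin 2) (Fin 2) ℝ := !![0, 0; c, d]
/-- The matrix `R = [[c, d], [0, 0]]`. -/
noncomputable def Rmat (c d : ℝ) : Matrix (Fin 2) (Fin 2) ℝ := !![c, d; 0, 0]
/-- The matrix `S = [[0, 0], [a, b]]`. -/
noncomputable def Smat (a b : ℝ) : Matrix (Fin 2) (Fin 2) ℝ := !![0, 0; a, b]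

/-- `Xi Pm Qm l m` is the sum, over all words of length `l + m` in the letters `Pm`, `Qm`
containing exactly `l` letters `Pm` and `m` letters `Qm`, of the ordered matrix product of the
letters of the word (a word is encoded as `w : Fin (l+m) → Bool`, `true` standing for `Pm`). -/
noncomputable def Xi (Pm Qm : Matrix (Fin 2) (Fin 2) ℝ) (l m : ℕ) :
    Matrix (Fin 2) (Fin 2) ℝ :=
  ∑ w ∈ Finset.univ.filter
      (fun w : Fin (l + m) → Bool => (Finset.univ.filter (fun i => w i = true)).card = l),
    (List.ofFn (fun i => if w i = true then Pm else Qm)).prod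



/-- Auxiliary: sum over words of a given length with a given number of `true`s. -/
noncomputable def XiW (Pm Qm : Matrix (Fin 2) (Fin 2) ℝ) (n l : ℕ) : Matrix (Fin 2) (Fin 2) ℝ :=
  ∑ w ∈ Finset.univ.filter
      (fun w : Fin n → Bool => (Finset.univ.filter (fun i => w i = true)).card = l),
    (List.ofFn (fun i => if w i = true then Pm else Qm)).prod

lemma Xi_eq_XiW (Pm Qm : Matrix (Fin 2) (Fin 2) ℝ) (l m : ℕ) :
    Xi Pm Qm l m = XiW Pm Qm (l + m) l := rfl

lemma card_cons_filter (k : ℕ) (b : Bool) (wt : Fin k → Bool) :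
    (Finset.univ.filter (fun i : Fin (k+1) => (Fin.cons b wt : Fin (k+1) → Bool) i = true)).card
      = (if b then 1 else 0) + (Finset.univ.filter (fun i : Fin k => wt i = true)).card := by
  rw [Finset.card_filter, Finset.card_filter, Fin.sum_univ_succ]
  simp

lemma prod_cons_word (Pm Qm : Matrix (Fin 2) (Fin 2) ℝ) (k : ℕ) (b : Bool) (wt : Fin k → Bool) :
    (List.ofFn (fun i : Fin (k+1) =>
        if (Fin.cons b wt : Fin (k+1) → Bool) i = true then Pm else Qm)).prod
      = (if b then Pm else Qm)
          * (List.ofFn (fun i : Fin k => if wt i = true then Pm else Qm)).prod := by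
  rw [List.ofFn_succ, List.prod_cons]
  simp

lemma XiW_decomp (Pm Qm : Matrix (Fin 2) (Fin 2) ℝ) (n L : ℕ) :
    XiW Pm Qm (n+1) L =
      (∑ wt ∈ Finset.univ.filter
          (fun wt : Fin n → Bool =>
            1 + (Finset.univ.filter (fun i => wt i = true)).card = L),
        Pm * (List.ofFn (fun i => if wt i = true then Pm else Qm)).prod) +
      (∑ wt ∈ Finset.univ.filter
          (fun wt : Fin n → Bool =>
            (Finset.univ.filter (fun i => wt i = true)).card = L),
        Qm * (List.ofFn (fun i => if wt i = true then Pm else Qm)).prod) := by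
  rw [XiW, Finset.sum_filter, Finset.sum_filter, Finset.sum_filter]
  rw [← Fintype.sum_equiv (Fin.consEquiv fun _ : Fin (n+1) => Bool)
      _ (fun w => if (Finset.univ.filter (fun i => w i = true)).card = L
          then (List.ofFn (fun i => if w i = true then Pm else Qm)).prod else 0)
      (fun _ => rfl)]
  rw [Fintype.sum_prod_type, Fintype.sum_bool]
  congr 1
  · apply Finset.sum_congr rfl
    intro wt _
    simp only [Fin.consEquiv_apply]
    rw [card_cons_filter, prod_cons_word]
    simp
  · apply Finset.sum_congr rfl
    intro wt _
    simp only [Fin.consEquiv_apply]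
    rw [card_cons_filter, prod_cons_word]
    simp

lemma XiW_succ_succ (Pm Qm : Matrix (Fin 2) (Fin 2) ℝ) (n l : ℕ) :
    XiW Pm Qm (n+1) (l+1) = Pm * XiW Pm Qm n l + Qm * XiW Pm Qm n (l+1) := by
  rw [XiW_decomp, XiW, XiW, Finset.mul_sum, Finset.mul_sum]
  congr 2
  apply Finset.filter_congr
  intro wt _
  omega

lemma XiW_succ_zero (Pm Qm : Matrix (Fin 2) (Fin 2) ℝ) (n : ℕ) :
    XiW Pm Qm (n+1) 0 = Qm * XiW Pm Qm n 0 := by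
  rw [XiW_decomp, XiW, Finset.mul_sum]
  have h : (Finset.univ.filter
      (fun wt : Fin n → Bool =>
        1 + (Finset.univ.filter (fun i => wt i = true)).card = 0)) = ∅ := by
    apply Finset.filter_false_of_mem
    intro wt _
    omega
  rw [h, Finset.sum_empty, zero_add]

lemma XiW_zero_zero (Pm Qm : Matrix (Fin 2) (Fin 2) ℝ) : XiW Pm Qm 0 0 = 1 := by
  rw [XiW, Finset.sum_filter]
  rw [Fintype.sum_subsingleton _ (fun i : Fin 0 => i.elim0)]
  rw [if_pos (by simp)]
  rw [show (List.ofFn fun i : Fin 0 =>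
    if (fun i : Fin 0 => i.elim0) i = true then Pm else Qm) = [] from List.ofFn_zero]
  exact List.prod_nil

lemma XiW_gt (Pm Qm : Matrix (Fin 2) (Fin 2) ℝ) (n l : ℕ) (h : n < l) : XiW Pm Qm n l = 0 := by
  rw [XiW]
  have hf : (Finset.univ.filter
      (fun w : Fin n → Bool => (Finset.univ.filter (fun i => w i = true)).card = l)) = ∅ := by
    apply Finset.filter_false_of_mem
    intro w _
    have := Finset.card_filter_le (Finset.univ : Finset (Fin n)) (fun i => w i = true)
    simp at this
    omega
  rw [hf, Finset.sum_empty]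

section MatMul

variable (a b c d : ℝ)

lemma mulPP : Pmat a b * Pmat a b = a • Pmat a b := by
  ext i j; fin_cases i <;> fin_cases j <;> simp [Pmat, Matrix.mul_apply, Fin.sum_univ_two]
lemma mulPQ : Pmat a b * Qmat c d = b • Rmat c d := by
  ext i j; fin_cases i <;> fin_cases j <;> simp [Pmat, Qmat, Rmat, Matrix.mul_apply, Fin.sum_univ_two]
lemma mulPR : Pmat a b * Rmat c d = a • Rmat c d := by
  ext i j; fin_cases i <;> fin_cases j <;> simp [Pmat, Rmat, Matrix.mul_apply, Fin.sum_univ_two]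
lemma mulPS : Pmat a b * Smat a b = b • Pmat a b := by
  ext i j; fin_cases i <;> fin_cases j <;> simp [Pmat, Smat, Matrix.mul_apply, Fin.sum_univ_two]
lemma mulQP : Qmat c d * Pmat a b = c • Smat a b := by
  ext i j; fin_cases i <;> fin_cases j <;> simp [Qmat, Pmat, Smat, Matrix.mul_apply, Fin.sum_univ_two]
lemma mulQQ : Qmat c d * Qmat c d = d • Qmat c d := by
  ext i j; fin_cases i <;> fin_cases j <;> simp [Qmat, Matrix.mul_apply, Fin.sum_univ_two]
lemma mulQR : Qmat c d * Rmat c d = c • Qmat c d := by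
  ext i j; fin_cases i <;> fin_cases j <;> simp [Qmat, Rmat, Matrix.mul_apply, Fin.sum_univ_two]
lemma mulQS : Qmat c d * Smat a b = d • Smat a b := by
  ext i j; fin_cases i <;> fin_cases j <;> simp [Qmat, Smat, Matrix.mul_apply, Fin.sum_univ_two]

end MatMul

section Coeffs

noncomputable def pterm (a b c d : ℝ) (l' m' i : ℕ) : ℝ :=
  (Nat.choose m' i : ℝ) * (Nat.choose l' (i+1) : ℝ) * d^(m'-i) * c^(i+1) * b^(i+1) * a^(l'-(i+1))
noncomputable def qterm (a b c d : ℝ) (l' m' i : ℕ) : ℝ :=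
  (Nat.choose l' i : ℝ) * (Nat.choose m' (i+1) : ℝ) * a^(l'-i) * b^(i+1) * c^(i+1) * d^(m'-(i+1))
noncomputable def rterm (a b c d : ℝ) (l' m' i : ℕ) : ℝ :=
  (Nat.choose l' i : ℝ) * (Nat.choose m' i : ℝ) * a^(l'-i) * b^(i+1) * c^i * d^(m'-i)
noncomputable def sterm (a b c d : ℝ) (l' m' i : ℕ) : ℝ :=
  (Nat.choose l' i : ℝ) * (Nat.choose m' i : ℝ) * a^(l'-i) * b^i * c^(i+1) * d^(m'-i)

noncomputable def p0 (a b c d : ℝ) (l' m' : ℕ) : ℝ :=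
  ∑ i ∈ Finset.range (l'+1), pterm a b c d l' m' i
noncomputable def q0 (a b c d : ℝ) (l' m' : ℕ) : ℝ :=
  ∑ i ∈ Finset.range (l'+1), qterm a b c d l' m' i
noncomputable def r0 (a b c d : ℝ) (l' m' : ℕ) : ℝ :=
  ∑ i ∈ Finset.range (l'+1), rterm a b c d l' m' i
noncomputable def s0 (a b c d : ℝ) (l' m' : ℕ) : ℝ :=
  ∑ i ∈ Finset.range (l'+1), sterm a b c d l' m' i

variable (a b c d : ℝ)

lemma p0_zero (m' : ℕ) : p0 a b c d 0 m' = 0 := by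
  simp [p0, pterm]

lemma q0_zero (l' : ℕ) : q0 a b c d l' 0 = 0 := by
  apply Finset.sum_eq_zero
  intro i _
  simp [qterm]

lemma r0_zero (m' : ℕ) : r0 a b c d 0 m' = b * d ^ m' := by
  simp [r0, rterm]

lemma s0_zero (l' : ℕ) : s0 a b c d l' 0 = c * a ^ l' := by
  rw [s0, Finset.sum_eq_single_of_mem 0 (by simp)]
  · simp [sterm]; ring
  · intro i _ hi
    rcases Nat.exists_eq_succ_of_ne_zero hi with ⟨j, rfl⟩
    simp [sterm]

lemma pA (l' m' : ℕ) :
    p0 a b c d (l'+1) m' = a * p0 a b c d l' m' + b * s0 a b c d l' m' := by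
  unfold p0 s0
  rw [Finset.sum_range_succ]
  have hlast : pterm a b c d (l'+1) m' (l'+1) = 0 := by
    unfold pterm; rw [Nat.choose_succ_self]; push_cast; ring
  rw [hlast, add_zero, Finset.mul_sum, Finset.mul_sum, ← Finset.sum_add_distrib]
  apply Finset.sum_congr rfl
  intro i hi
  unfold pterm sterm
  rcases le_or_gt (i+1) l' with h | h
  · rw [Nat.choose_succ_succ l' i, show l'+1-(i+1) = (l'-(i+1))+1 from by omega,
      show l'-i = (l'-(i+1))+1 from by omega]
    push_cast; ring
  · have hi' : i = l' := by simp at hi; omega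
    subst hi'
    rw [Nat.choose_succ_succ, Nat.choose_succ_self, Nat.choose_self,
      show i-i = 0 from by omega, show i-(i+1) = 0 from by omega,
      show i+1-(i+1) = 0 from by omega]
    push_cast; ring

lemma qC (l' m' : ℕ) :
    q0 a b c d l' (m'+1) = d * q0 a b c d l' m' + c * r0 a b c d l' m' := by
  unfold q0 r0
  rw [Finset.mul_sum, Finset.mul_sum, ← Finset.sum_add_distrib]
  apply Finset.sum_congr rfl
  intro i _
  unfold qterm rterm
  rcases le_or_gt (i+1) m' with h | h
  · rw [Nat.choose_succ_succ m' i, show m'+1-(i+1) = m'-i from by omega,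
      show m'-i = (m'-(i+1))+1 from by omega]
    push_cast; ring
  · rw [Nat.choose_succ_succ m' i, Nat.choose_eq_zero_of_lt h,
      show m'+1-(i+1) = m'-i from by omega]
    push_cast; ring

lemma shift_sum' (F G H : ℕ → ℝ) (n : ℕ)
    (h1 : ∀ i ∈ Finset.range n, F (i+1) = G i + H (i+1))
    (h2 : F 0 = H 0) (h3 : G n = 0) :
    ∑ i ∈ Finset.range (n+1), F i
      = ∑ i ∈ Finset.range (n+1), G i + ∑ i ∈ Finset.range (n+1), H i := by
  rw [Finset.sum_range_succ' F, Finset.sum_congr rfl h1, Finset.sum_add_distrib,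
    Finset.sum_range_succ G, h3, add_zero, Finset.sum_range_succ' H, h2]
  ring

lemma rB (l' m' : ℕ) :
    r0 a b c d (l'+1) m' = b * q0 a b c d l' m' + a * r0 a b c d l' m' := by
  unfold r0 q0
  rw [Finset.mul_sum, Finset.mul_sum]
  have key : ∑ i ∈ Finset.range (l'+2), rterm a b c d (l'+1) m' i
      = ∑ i ∈ Finset.range (l'+2), b * qterm a b c d l' m' i
        + ∑ i ∈ Finset.range (l'+2), a * rterm a b c d l' m' i := by
    apply shift_sum'
    · intro i hi
      simp only [Finset.mem_range] at hi
      unfold rterm qterm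
      rcases le_or_gt (i+1) l' with h | h
      · rw [Nat.choose_succ_succ l' i, show l'+1-(i+1) = (l'-(i+1))+1 from by omega,
          show l'-i = (l'-(i+1))+1 from by omega]
        push_cast; ring
      · have hi' : i = l' := by omega
        subst hi'
        rw [Nat.choose_succ_succ, Nat.choose_succ_self, Nat.choose_self,
          show i-i = 0 from by omega, show i-(i+1) = 0 from by omega,
          show i+1-(i+1) = 0 from by omega]
        push_cast; ring
    · unfold rterm
      simp [pow_succ]
      ring
    · unfold qterm
      rw [Nat.choose_succ_self]
      push_cast; ring
  rw [key, Finset.sum_range_succ (fun i => b * qterm a b c d l' m' i) (l'+1),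
    Finset.sum_range_succ (fun i => a * rterm a b c d l' m' i) (l'+1)]
  have z1 : b * qterm a b c d l' m' (l'+1) = 0 := by
    unfold qterm; rw [Nat.choose_succ_self]; push_cast; ring
  have z2 : a * rterm a b c d l' m' (l'+1) = 0 := by
    unfold rterm; rw [Nat.choose_succ_self]; push_cast; ring
  rw [z1, z2, add_zero, add_zero]

lemma sD (l' m' : ℕ) :
    s0 a b c d l' (m'+1) = c * p0 a b c d l' m' + d * s0 a b c d l' m' := by
  unfold s0 p0
  rw [Finset.mul_sum, Finset.mul_sum]
  apply shift_sum'
  · intro i hi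
    simp only [Finset.mem_range] at hi
    unfold sterm pterm
    rcases le_or_gt (i+1) m' with h | h
    · rw [Nat.choose_succ_succ m' i, show m'+1-(i+1) = m'-i from by omega,
        show m'-i = (m'-(i+1))+1 from by omega]
      push_cast; ring
    · rw [Nat.choose_succ_succ m' i, Nat.choose_eq_zero_of_lt h,
        show m'+1-(i+1) = m'-i from by omega]
      push_cast; ring
  · unfold sterm
    simp [pow_succ]
    ring
  · unfold pterm
    rw [Nat.choose_succ_self]
    push_cast; ring

end Coeffs

section Boundary

variable (a b c d : ℝ)

lemma XiW_diag (n : ℕ) :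
    XiW (Pmat a b) (Qmat c d) (n+1) (n+1) = a^n • Pmat a b := by
  induction n with
  | zero =>
    rw [XiW_succ_succ, XiW_zero_zero, XiW_gt _ _ 0 1 (by omega), mul_one, mul_zero, add_zero]
    simp
  | succ n ihn =>
    rw [XiW_succ_succ, ihn, XiW_gt _ _ (n+1) (n+2) (by omega), mul_zero, add_zero,
      mul_smul_comm, mulPP, smul_smul, ← pow_succ]

lemma XiW_col (n : ℕ) :
    XiW (Pmat a b) (Qmat c d) (n+1) 0 = d^n • Qmat c d := by
  induction n with
  | zero =>
    rw [XiW_succ_zero, XiW_zero_zero, mul_one]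
    simp
  | succ n ihn =>
    rw [XiW_succ_zero, ihn, mul_smul_comm, mulQQ, smul_smul, ← pow_succ]

lemma Xi_P (n : ℕ) : Xi (Pmat a b) (Qmat c d) (n+1) 0 = a^n • Pmat a b :=
  XiW_diag a b c d n

lemma Xi_Q (n : ℕ) : Xi (Pmat a b) (Qmat c d) 0 (n+1) = d^n • Qmat c d := by
  rw [Xi_eq_XiW, show 0 + (n+1) = n+1 from by omega, XiW_col]

lemma Xi_rec (Pm Qm : Matrix (Fin 2) (Fin 2) ℝ) (l m : ℕ) :
    Xi Pm Qm (l+1) (m+1) = Pm * Xi Pm Qm l (m+1) + Qm * Xi Pm Qm (l+1) m := by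
  have h3 : Xi Pm Qm l (m+1) = XiW Pm Qm ((l+1)+m) l := by
    rw [Xi_eq_XiW, show l + (m+1) = (l+1)+m from by omega]
  rw [show Xi Pm Qm (l+1) (m+1) = XiW Pm Qm (((l+1)+m)+1) (l+1) from rfl,
    XiW_succ_succ, h3, Xi_eq_XiW]

end Boundary

lemma Xi_expand (a b c d : ℝ) (N : ℕ) : ∀ l' m', l' + m' ≤ N →
    Xi (Pmat a b) (Qmat c d) (l'+1) (m'+1)
      = p0 a b c d l' m' • Pmat a b + q0 a b c d l' m' • Qmat c d
        + r0 a b c d l' m' • Rmat c d + s0 a b c d l' m' • Smat a b := by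
  induction N with
  | zero =>
    intro l' m' h
    obtain ⟨rfl, rfl⟩ : l' = 0 ∧ m' = 0 := by omega
    rw [Xi_rec, Xi_Q, Xi_P, p0_zero, q0_zero, r0_zero, s0_zero, pow_zero, pow_zero,
      mul_smul_comm, mul_smul_comm, mulPQ, mulQP]
    module
  | succ N ih =>
    intro l' m' h
    match l', m' with
    | 0, 0 =>
      rw [Xi_rec, Xi_Q, Xi_P, p0_zero, q0_zero, r0_zero, s0_zero, pow_zero, pow_zero,
        mul_smul_comm, mul_smul_comm, mulPQ, mulQP]
      module
    | 0, m''+1 =>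
      rw [Xi_rec, Xi_Q, ih 0 m'' (by omega), qC a b c d 0 m'', sD a b c d 0 m'',
        p0_zero a b c d (m''+1), r0_zero a b c d (m''+1),
        mul_smul_comm, mulPQ, mul_add, mul_add, mul_add,
        mul_smul_comm, mul_smul_comm, mul_smul_comm, mul_smul_comm,
        mulQP, mulQQ, mulQR, mulQS]
      module
    | l''+1, 0 =>
      rw [Xi_rec, Xi_P, ih l'' 0 (by omega), pA a b c d l'' 0, rB a b c d l'' 0,
        q0_zero a b c d (l''+1), s0_zero a b c d (l''+1),
        mul_smul_comm, mulQP, mul_add, mul_add, mul_add,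
        mul_smul_comm, mul_smul_comm, mul_smul_comm, mul_smul_comm,
        mulPP, mulPQ, mulPR, mulPS]
      module
    | l''+1, m''+1 =>
      rw [Xi_rec, ih l'' (m''+1) (by omega), ih (l''+1) m'' (by omega),
        pA a b c d l'' (m''+1), rB a b c d l'' (m''+1),
        qC a b c d (l''+1) m'', sD a b c d (l''+1) m'',
        mul_add, mul_add, mul_add, mul_add, mul_add, mul_add,
        mul_smul_comm, mul_smul_comm, mul_smul_comm, mul_smul_comm,
        mul_smul_comm, mul_smul_comm, mul_smul_comm, mul_smul_comm,
        mulPP, mulPQ, mulPR, mulPS, mulQP, mulQQ, mulQR, mulQS]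
      module

lemma q0_eq_Icc (a b c d : ℝ) (l' m' : ℕ) :
    (∑ γ ∈ Finset.Icc 1 (min (l'+1) ((m'+1) - 1)),
        (Nat.choose ((l'+1) - 1) (γ - 1) : ℝ) * (Nat.choose ((m'+1) - 1) γ : ℝ)
          * a ^ ((l'+1) - γ) * b ^ γ * c ^ γ * d ^ ((m'+1) - (γ + 1)))
      = q0 a b c d l' m' := by
  rw [← Finset.Ico_add_one_right_eq_Icc, Finset.sum_Ico_eq_sum_range]
  rw [show min (l'+1) ((m'+1)-1) + 1 - 1 = min (l'+1) m' from by omega]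
  refine Eq.trans (Finset.sum_subset (Finset.range_subset_range.2 (min_le_left (l'+1) m')) ?_) ?_
  · intro i hi hni
    simp only [Finset.mem_range, lt_min_iff, not_and_or, not_lt] at hi hni
    have hz : Nat.choose ((m'+1) - 1) (1+i) = 0 := by
      apply Nat.choose_eq_zero_of_lt
      omega
    rw [hz]
    push_cast; ring
  · apply Finset.sum_congr rfl
    intro i _
    unfold qterm
    rw [show (1+i) - 1 = i from by omega, show (l'+1) - 1 = l' from by omega,
      show (m'+1) - 1 = m' from by omega, show (l'+1) - (1+i) = l'-i from by omega,
      show (m'+1) - ((1+i)+1) = m'-(i+1) from by omega, show 1+i = i+1 from by omega]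

lemma r0_eq_Icc (a b c d : ℝ) (l' m' : ℕ) :
    (∑ γ ∈ Finset.Icc 1 (min (l'+1) (m'+1)),
        (Nat.choose ((l'+1) - 1) (γ - 1) : ℝ) * (Nat.choose ((m'+1) - 1) (γ - 1) : ℝ)
          * a ^ ((l'+1) - γ) * b ^ γ * c ^ (γ - 1) * d ^ ((m'+1) - γ))
      = r0 a b c d l' m' := by
  rw [← Finset.Ico_add_one_right_eq_Icc, Finset.sum_Ico_eq_sum_range]
  rw [show min (l'+1) (m'+1) + 1 - 1 = min (l'+1) (m'+1) from by omega]
  refine Eq.trans (Finset.sum_subset (Finset.range_subset_range.2 (min_le_left (l'+1) (m'+1))) ?_) ?_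
  · intro i hi hni
    simp only [Finset.mem_range, lt_min_iff, not_and_or, not_lt] at hi hni
    have hz : Nat.choose ((m'+1) - 1) ((1+i) - 1) = 0 := by
      apply Nat.choose_eq_zero_of_lt
      omega
    rw [hz]
    push_cast; ring
  · apply Finset.sum_congr rfl
    intro i _
    unfold rterm
    rw [show (1+i) - 1 = i from by omega, show (l'+1) - 1 = l' from by omega,
      show (m'+1) - 1 = m' from by omega, show (l'+1) - (1+i) = l'-i from by omega,
      show (m'+1) - (1+i) = m'-i from by omega, show 1+i = i+1 from by omega]

lemma s0_eq_Icc (a b c d : ℝ) (l' m' : ℕ) :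
    (∑ γ ∈ Finset.Icc 1 (min (l'+1) (m'+1)),
        (Nat.choose ((l'+1) - 1) (γ - 1) : ℝ) * (Nat.choose ((m'+1) - 1) (γ - 1) : ℝ)
          * a ^ ((l'+1) - γ) * b ^ (γ - 1) * c ^ γ * d ^ ((m'+1) - γ))
      = s0 a b c d l' m' := by
  rw [← Finset.Ico_add_one_right_eq_Icc, Finset.sum_Ico_eq_sum_range]
  rw [show min (l'+1) (m'+1) + 1 - 1 = min (l'+1) (m'+1) from by omega]
  refine Eq.trans (Finset.sum_subset (Finset.range_subset_range.2 (min_le_left (l'+1) (m'+1))) ?_) ?_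
  · intro i hi hni
    simp only [Finset.mem_range, lt_min_iff, not_and_or, not_lt] at hi hni
    have hz : Nat.choose ((m'+1) - 1) ((1+i) - 1) = 0 := by
      apply Nat.choose_eq_zero_of_lt
      omega
    rw [hz]
    push_cast; ring
  · apply Finset.sum_congr rfl
    intro i _
    unfold sterm
    rw [show (1+i) - 1 = i from by omega, show (l'+1) - 1 = l' from by omega,
      show (m'+1) - 1 = m' from by omega, show (l'+1) - (1+i) = l'-i from by omega,
      show (m'+1) - (1+i) = m'-i from by omega, show 1+i = i+1 from by omega]

/-- In the (unique) expansion `Ξ(l,m) = p P + q Q + r R + s S`: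
(a) for `l ≥ 1`, `m ≥ 2`,
`q(l,m) = Σ_{γ=1}^{min(l,m−1)} C(l−1,γ−1) C(m−1,γ) a^{l−γ} b^γ c^γ d^{m−(γ+1)}`;
(b) for `l ≥ 1`, `m ≥ 1`,
`r(l,m) = Σ_{γ=1}^{min(l,m)} C(l−1,γ−1) C(m−1,γ−1) a^{l−γ} b^γ c^{γ−1} d^{m−γ}`;
(c) for `l ≥ 1`, `m ≥ 1`,
`s(l,m) = Σ_{γ=1}^{min(l,m)} C(l−1,γ−1) C(m−1,γ−1) a^{l−γ} b^{γ−1} c^γ d^{m−γ}`. -/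
theorem qrs_coefficients (a d b c : ℝ) (ha : 0 < a) (ha1 : a < 1) (hd : 0 < d) (hd1 : d < 1)
    (hb : b = 1 - d) (hc : c = 1 - a) (hΔ : a * d - b * c ≠ 0) :
    (∀ l m : ℕ, 1 ≤ l → 2 ≤ m → ∀ p q r s : ℝ,
      Xi (Pmat a b) (Qmat c d) l m =
          p • Pmat a b + q • Qmat c d + r • Rmat c d + s • Smat a b →
      q = ∑ γ ∈ Finset.Icc 1 (min l (m - 1)),
            (Nat.choose (l - 1) (γ - 1) : ℝ) * (Nat.choose (m - 1) γ : ℝ)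
              * a ^ (l - γ) * b ^ γ * c ^ γ * d ^ (m - (γ + 1))) ∧
    (∀ l m : ℕ, 1 ≤ l → 1 ≤ m → ∀ p q r s : ℝ,
      Xi (Pmat a b) (Qmat c d) l m =
          p • Pmat a b + q • Qmat c d + r • Rmat c d + s • Smat a b →
      r = ∑ γ ∈ Finset.Icc 1 (min l m),
            (Nat.choose (l - 1) (γ - 1) : ℝ) * (Nat.choose (m - 1) (γ - 1) : ℝ)
              * a ^ (l - γ) * b ^ γ * c ^ (γ - 1) * d ^ (m - γ) ∧
      s = ∑ γ ∈ Finset.Icc 1 (min l m),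
            (Nat.choose (l - 1) (γ - 1) : ℝ) * (Nat.choose (m - 1) (γ - 1) : ℝ)
              * a ^ (l - γ) * b ^ (γ - 1) * c ^ γ * d ^ (m - γ)) := by
  constructor
  · intro l m hl hm p q r s hEq
    obtain ⟨l', rfl⟩ : ∃ l', l = l'+1 := ⟨l-1, by omega⟩
    obtain ⟨m'', hm'⟩ : ∃ m'', m = m''+2 := ⟨m-2, by omega⟩
    subst hm'
    have hX := Xi_expand a b c d (l'+(m''+1)) l' (m''+1) le_rfl
    rw [hEq] at hX
    have h10 := congrFun (congrFun hX 1) 0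
    have h11 := congrFun (congrFun hX 1) 1
    simp [Pmat, Qmat, Rmat, Smat, Matrix.add_apply, Matrix.smul_apply] at h10 h11
    have hq : q = q0 a b c d l' (m''+1) := by
      have hne : b*c - a*d ≠ 0 := fun hh => hΔ (by linarith)
      have hz : (q - q0 a b c d l' (m''+1)) * (b*c - a*d) = 0 := by
        linear_combination b*h10 - a*h11
      rcases mul_eq_zero.1 hz with h | h
      · linarith
      · exact absurd h hne
    rw [hq]
    exact (q0_eq_Icc a b c d l' (m''+1)).symm
  · intro l m hl hm p q r s hEq
    obtain ⟨l', rfl⟩ : ∃ l', l = l'+1 := ⟨l-1, by omega⟩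
    obtain ⟨m', rfl⟩ : ∃ m', m = m'+1 := ⟨m-1, by omega⟩
    have hX := Xi_expand a b c d (l'+m') l' m' le_rfl
    rw [hEq] at hX
    have h00 := congrFun (congrFun hX 0) 0
    have h01 := congrFun (congrFun hX 0) 1
    have h10 := congrFun (congrFun hX 1) 0
    have h11 := congrFun (congrFun hX 1) 1
    simp [Pmat, Qmat, Rmat, Smat, Matrix.add_apply, Matrix.smul_apply] at h00 h01 h10 h11
    have hne : b*c - a*d ≠ 0 := fun hh => hΔ (by linarith)
    constructor
    · have hz : (r - r0 a b c d l' m') * (b*c - a*d) = 0 := by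
        linear_combination b*h00 - a*h01
      have hr : r = r0 a b c d l' m' := by
        rcases mul_eq_zero.1 hz with h | h
        · linarith
        · exact absurd h hne
      rw [hr]
      exact (r0_eq_Icc a b c d l' m').symm
    · have hz : (s - s0 a b c d l' m') * (a*d - b*c) = 0 := by
        linear_combination d*h10 - c*h11
      have hs : s = s0 a b c d l' m' := by
        rcases mul_eq_zero.1 hz with h | h
        · linarith
        · exact absurd h hΔ
      rw [hs]
      exact (s0_eq_Icc a b c d l' m').symm
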